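/- Exactness of the Gauss–Legendre quadrature: let n ≥ 1 and let P_n be the degree-n Legendre polynomial defined by the Rodrigues formula P_n(x) = (1/(2ⁿ n!)) dⁿ/dxⁿ (x² − 1)ⁿ. Then P_n has exactly n distinct real roots η₁, …, η_n, all lying in the open interval (−1, 1), and with the weights w_i = 2 / ( (1 − η_i²) (P_n′(η_i))² ), the quadrature rule is exact for all polynomials of degree at most 2n − 1: for every polynomial f with deg f ≤ 2n − 1, ∫_{−1}^{1} f(η) dη = Σ_{i=1}^{n} w_i f(η_i). -/

import Mathlib

open MeasureTheory intervalIntegral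

/-- The degree-`n` Legendre polynomial via the Rodrigues formula
`P_n(x) = (1/(2ⁿ n!)) dⁿ/dxⁿ (x² − 1)ⁿ`. -/
noncomputable def legendreP (n : ℕ) (x : ℝ) : ℝ :=
  (1 / ((2 : ℝ) ^ n * (n.factorial : ℝ))) * iteratedDeriv n (fun y : ℝ => (y ^ 2 - 1) ^ n) x

namespace GaussLeg

open Polynomial

/-- `(X² − 1)ⁿ` as a polynomial. -/
noncomputable def U (n : ℕ) : ℝ[X] := ((X : ℝ[X]) ^ 2 - 1) ^ n

/-- The Rodrigues constant `1/(2ⁿ n!)`. -/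
noncomputable def rc (n : ℕ) : ℝ := 1 / ((2 : ℝ) ^ n * (n.factorial : ℝ))

/-- The Legendre polynomial as a `Polynomial ℝ`. -/
noncomputable def Lp (n : ℕ) : ℝ[X] := C (rc n) * derivative^[n] (U n)

/-- Leading coefficient `(2n)!/(2ⁿ (n!)²)`. -/
noncomputable def lc (n : ℕ) : ℝ :=
  ((2 * n).factorial : ℝ) / ((2 : ℝ) ^ n * ((n.factorial : ℝ)) ^ 2)

lemma rc_pos (n : ℕ) : 0 < rc n := by
  have h : (0:ℝ) < n.factorial := by exact_mod_cast n.factorial_pos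
  unfold rc; positivity

lemma lc_pos (n : ℕ) : 0 < lc n := by
  have h : (0:ℝ) < (2*n).factorial := by exact_mod_cast (2*n).factorial_pos
  have h2 : (0:ℝ) < n.factorial := by exact_mod_cast n.factorial_pos
  unfold lc; positivity

lemma iteratedDeriv_eval (k : ℕ) (p : ℝ[X]) :
    iteratedDeriv k (fun y : ℝ => p.eval y) = fun x => (derivative^[k] p).eval x := by
  induction k with
  | zero => simp
  | succ k ih =>
    rw [iteratedDeriv_succ, ih]
    funext x
    rw [Function.iterate_succ_apply']
    exact Polynomial.deriv (p := derivative^[k] p)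

lemma legendreP_eq (n : ℕ) (x : ℝ) : legendreP n x = (Lp n).eval x := by
  have h : (fun y : ℝ => (y ^ 2 - 1) ^ n) = fun y : ℝ => (U n).eval y := by
    funext y; simp [U]
  rw [legendreP, h, iteratedDeriv_eval]
  simp [Lp, rc]

lemma deriv_legendreP_eq (n : ℕ) (x : ℝ) :
    deriv (legendreP n) x = (derivative (Lp n)).eval x := by
  have h : legendreP n = fun x => (Lp n).eval x := funext (legendreP_eq n)
  rw [h]; exact Polynomial.deriv (p := Lp n)

lemma sq_sub_one_monic : ((X : ℝ[X]) ^ 2 - 1).Monic := by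
  have := monic_X_pow_sub_C (1 : ℝ) (n := 2) two_ne_zero
  simpa using this

lemma U_monic (n : ℕ) : (U n).Monic := sq_sub_one_monic.pow n

lemma U_natDegree (n : ℕ) : (U n).natDegree = 2 * n := by
  have h2 : ((X : ℝ[X]) ^ 2 - 1).natDegree = 2 := by
    have := natDegree_X_pow_sub_C (n := 2) (r := (1:ℝ))
    simpa using this
  rw [U, sq_sub_one_monic.natDegree_pow, h2, Nat.mul_comm]

lemma descFactorial_cast (n : ℕ) :
    (((2 * n).descFactorial n : ℕ) : ℝ) = ((2 * n).factorial : ℝ) / (n.factorial : ℝ) := by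
  have h : n ≤ 2 * n := by omega
  have := Nat.factorial_mul_descFactorial h
  have h2 : 2 * n - n = n := by omega
  rw [h2] at this
  have hnf : (n.factorial : ℝ) ≠ 0 := by
    exact_mod_cast n.factorial_pos.ne'
  field_simp
  rw [mul_comm]
  exact_mod_cast this

lemma Lp_coeff_n (n : ℕ) : (Lp n).coeff n = lc n := by
  have hU : (U n).coeff (n + n) = 1 := by
    have := (U_monic n).leadingCoeff
    rwa [leadingCoeff, U_natDegree, show 2 * n = n + n by ring] at this
  rw [Lp, coeff_C_mul, coeff_iterate_derivative, hU]
  rw [nsmul_eq_mul, mul_one]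
  rw [show n + n = 2 * n by ring, descFactorial_cast]
  have hnf : (n.factorial : ℝ) ≠ 0 := by exact_mod_cast n.factorial_pos.ne'
  rw [rc, lc]
  field_simp

lemma Lp_natDegree_le (n : ℕ) : (Lp n).natDegree ≤ n := by
  refine (natDegree_C_mul_le _ _).trans ?_
  refine (natDegree_iterate_derivative _ _).trans ?_
  rw [U_natDegree]; omega

lemma Lp_natDegree (n : ℕ) : (Lp n).natDegree = n := by
  refine le_antisymm (Lp_natDegree_le n) ?_
  apply le_natDegree_of_ne_zero
  rw [Lp_coeff_n]
  exact (lc_pos n).ne'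

lemma Lp_leadingCoeff (n : ℕ) : (Lp n).leadingCoeff = lc n := by
  rw [leadingCoeff, Lp_natDegree, Lp_coeff_n]

lemma Lp_ne_zero (n : ℕ) : Lp n ≠ 0 := by
  intro h
  have := Lp_leadingCoeff n
  rw [h, leadingCoeff_zero] at this
  exact (lc_pos n).ne' this.symm

/-- `Dᵏ (X²−1)ⁿ = (X²−1)^{n−k} * g`. -/
lemma iterate_deriv_U_factor (n k : ℕ) (hk : k ≤ n) :
    ∃ g : ℝ[X], derivative^[k] (U n) = U (n - k) * g := by
  induction k with
  | zero => exact ⟨1, by simp⟩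
  | succ k ih =>
    obtain ⟨g, hg⟩ := ih (by omega)
    refine ⟨C (((n - k : ℕ)) : ℝ) * derivative ((X : ℝ[X]) ^ 2 - 1) * g
      + ((X : ℝ[X]) ^ 2 - 1) * derivative g, ?_⟩
    rw [Function.iterate_succ_apply', hg, derivative_mul]
    simp only [U, derivative_pow]
    have h2 : n - k - 1 = n - (k + 1) := by omega
    have h1 : n - k = (n - (k + 1)) + 1 := by omega
    rw [h2, h1, pow_succ]
    ring

lemma iterate_deriv_U_eval_one (n k : ℕ) (hk : k < n) :
    (derivative^[k] (U n)).eval 1 = 0 := by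
  obtain ⟨g, hg⟩ := iterate_deriv_U_factor n k hk.le
  have h : n - k ≠ 0 := by omega
  rw [hg, eval_mul, U]
  simp [zero_pow h]

lemma iterate_deriv_U_eval_neg_one (n k : ℕ) (hk : k < n) :
    (derivative^[k] (U n)).eval (-1) = 0 := by
  obtain ⟨g, hg⟩ := iterate_deriv_U_factor n k hk.le
  have h : n - k ≠ 0 := by omega
  rw [hg, eval_mul, U]
  norm_num [zero_pow h]

/-- Interval integral of a polynomial over `[-1,1]`. -/
noncomputable def pint (p : ℝ[X]) : ℝ := ∫ x in (-1 : ℝ)..1, p.eval x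

lemma pint_intable (p : ℝ[X]) : IntervalIntegrable (fun x => p.eval x) volume (-1 : ℝ) 1 :=
  p.continuous.intervalIntegrable _ _

lemma pint_add (p q : ℝ[X]) : pint (p + q) = pint p + pint q := by
  simp only [pint, eval_add]
  exact integral_add (pint_intable p) (pint_intable q)

lemma pint_smul (a : ℝ) (p : ℝ[X]) : pint (C a * p) = a * pint p := by
  simp only [pint, eval_mul, eval_C]
  exact integral_const_mul a _

lemma pint_derivative (p : ℝ[X]) : pint (derivative p) = p.eval 1 - p.eval (-1) := by
  exact integral_deriv_eq_sub' (fun x => p.eval x)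
    (funext fun x => Polynomial.deriv (p := p))
    (fun x _ => p.differentiableAt)
    ((derivative p).continuous.continuousOn)

/-- Integration by parts. -/
lemma pint_parts (p q : ℝ[X]) :
    pint (derivative p * q) =
      ((p * q).eval 1 - (p * q).eval (-1)) - pint (p * derivative q) := by
  have h := pint_derivative (p * q)
  rw [derivative_mul, pint_add] at h
  linarith

/-- Iterated integration by parts for the Rodrigues factor. -/
lemma pint_ortho_aux (n : ℕ) (j : ℕ) (hj : j ≤ n) (g : ℝ[X]) :
    pint (derivative^[n] (U n) * g) =
      (-1 : ℝ) ^ j * pint (derivative^[n - j] (U n) * derivative^[j] g) := by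
  induction j with
  | zero => simp
  | succ j ih =>
    rw [ih (by omega)]
    have h1 : n - j = (n - (j + 1)) + 1 := by omega
    have hb1 := iterate_deriv_U_eval_one n (n - (j + 1)) (by omega)
    have hb2 := iterate_deriv_U_eval_neg_one n (n - (j + 1)) (by omega)
    rw [h1, Function.iterate_succ_apply' derivative (n - (j+1)) (U n), pint_parts,
      eval_mul, eval_mul, hb1, hb2,
      ← Function.iterate_succ_apply' derivative j g]
    ring

/-- Orthogonality: `∫ Pₙ g = 0` for `deg g < n`. -/
lemma pint_ortho (n : ℕ) (g : ℝ[X]) (hg : g.degree < (n : ℕ)) :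
    pint (Lp n * g) = 0 := by
  rcases eq_or_ne g 0 with rfl | hg0
  · simp [pint]
  have hdeg : g.natDegree < n := (natDegree_lt_iff_degree_lt hg0).mpr hg
  have hD : derivative^[n] g = 0 := iterate_derivative_eq_zero hdeg
  have h := pint_ortho_aux n n le_rfl g
  rw [Nat.sub_self, hD, Function.iterate_zero_apply] at h
  have hLp : Lp n * g = C (rc n) * (derivative^[n] (U n) * g) := by
    rw [Lp]; ring
  rw [hLp, pint_smul, h]
  simp [pint]

/-- `J m = ∫_{-1}^1 (1-x²)^m dx = 2^{2m+1} (m!)²/(2m+1)!`. -/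
lemma pint_one_sub_sq (m : ℕ) :
    pint (((1 : ℝ[X]) - X ^ 2) ^ m) =
      2 ^ (2 * m + 1) * ((m.factorial : ℝ)) ^ 2 / ((2 * m + 1).factorial : ℝ) := by
  induction m with
  | zero =>
    simp only [pow_zero, pint]
    norm_num
  | succ m ih =>
    set V : ℝ[X] := 1 - X ^ 2 with hV
    have hdV : derivative V = C (-2) * X := by
      simp [hV]
      rw [one_add_one_eq_two]; exact (map_ofNat C 2).symm
    have hder : C (2 * (m : ℝ) + 3) * V ^ (m + 1) =
        derivative ((X : ℝ[X]) * V ^ (m + 1)) + C (2 * (m : ℝ) + 2) * V ^ m := by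
      rw [derivative_mul, derivative_X, derivative_pow, hdV]
      simp only [Nat.add_sub_cancel]
      push_cast
      have hC : ∀ a b : ℝ, C (a + b) = C a + C b := fun a b => map_add C a b
      have hC2 : ∀ a b : ℝ, C (a * b) = C a * C b := fun a b => map_mul C a b
      rw [show ((2:ℝ) * m + 3) = (2 * (m:ℝ) + 2) + 1 by ring]
      simp only [hC, hC2, map_ofNat, map_one, map_neg]
      rw [hV]
      ring
    have heval1 : ((X : ℝ[X]) * V ^ (m + 1)).eval 1 = 0 := by simp [hV]
    have hevalm1 : ((X : ℝ[X]) * V ^ (m + 1)).eval (-1) = 0 := by simp [hV]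
    have hp := congrArg pint hder
    rw [pint_smul, pint_add, pint_smul, pint_derivative, heval1, hevalm1, ih] at hp
    have h3 : (2 * (m : ℝ) + 3) ≠ 0 := by positivity
    have hfac : ((2 * (m + 1) + 1).factorial : ℝ) =
        (2 * (m:ℝ) + 3) * ((2 * (m:ℝ) + 2) * ((2 * m + 1).factorial : ℝ)) := by
      rw [show 2 * (m + 1) + 1 = (2 * m + 1) + 1 + 1 by ring]
      rw [Nat.factorial_succ, Nat.factorial_succ]
      push_cast
      ring
    have hfacm : (((m + 1).factorial : ℝ)) = ((m : ℝ) + 1) * (m.factorial : ℝ) := by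
      rw [Nat.factorial_succ]; push_cast; ring
    have hfpos : (0:ℝ) < ((2 * m + 1).factorial : ℝ) := by
      exact_mod_cast (2 * m + 1).factorial_pos
    rw [hfac, hfacm]
    rw [sub_zero] at hp
    have : pint (V ^ (m + 1)) =
        (2 * (m:ℝ) + 2) * (2 ^ (2 * m + 1) * (m.factorial : ℝ) ^ 2 /
          ((2 * m + 1).factorial : ℝ)) / (2 * (m:ℝ) + 3) := by
      field_simp at hp ⊢
      linarith
    rw [this]
    rw [show 2 * (m + 1) + 1 = 2 * m + 3 by ring]
    field_simp
    ring

lemma pint_Lp_mul_Xpow (m : ℕ) :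
    pint (Lp m * X ^ m) =
      rc m * (m.factorial : ℝ) *
        (2 ^ (2 * m + 1) * ((m.factorial : ℝ)) ^ 2 / ((2 * m + 1).factorial : ℝ)) := by
  have h := pint_ortho_aux m m le_rfl (X ^ m)
  rw [Nat.sub_self, Function.iterate_zero_apply] at h
  have hX : derivative^[m] ((X : ℝ[X]) ^ m) = C (m.factorial : ℝ) := by
    rw [iterate_derivative_X_pow_eq_C_mul, Nat.sub_self, pow_zero, mul_one,
      Nat.descFactorial_self]
  rw [hX] at h
  have hUm : U m = C ((-1 : ℝ) ^ m) * ((1 : ℝ[X]) - X ^ 2) ^ m := by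
    rw [U, show ((X : ℝ[X]) ^ 2 - 1) = (-1) * (1 - X ^ 2) by ring, mul_pow,
      map_pow, map_neg, map_one]
  have hLp : Lp m * X ^ m = C (rc m) * (derivative^[m] (U m) * X ^ m) := by
    rw [Lp]; ring
  have hcomm : U m * C ((m.factorial : ℝ)) = C ((m.factorial : ℝ)) * U m := by ring
  rw [hLp, pint_smul, h, hcomm, pint_smul, hUm, pint_smul, pint_one_sub_sq]
  have hsign : ((-1 : ℝ)) ^ m * ((-1 : ℝ)) ^ m = 1 := by
    rw [← pow_add]
    exact Even.neg_one_pow ⟨m, by ring⟩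
  linear_combination (rc m * (m.factorial : ℝ) *
    (2 ^ (2 * m + 1) * ((m.factorial : ℝ)) ^ 2 / ((2 * m + 1).factorial : ℝ))) * hsign

/-- The key constant: `aₙ ∫ P_{n-1} x^{n-1} = 2/n`. -/
lemma key_const (n : ℕ) (hn : 1 ≤ n) :
    lc n * pint (Lp (n - 1) * X ^ (n - 1)) = 2 / n := by
  obtain ⟨m, rfl⟩ : ∃ m, n = m + 1 := ⟨n - 1, by omega⟩
  simp only [Nat.add_sub_cancel]
  rw [pint_Lp_mul_Xpow, lc, rc]
  have h1 : (2 * (m + 1)).factorial = (2 * m + 2) * ((2 * m + 1) * (2 * m).factorial) := by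
    rw [show 2 * (m + 1) = (2 * m + 1) + 1 by ring, Nat.factorial_succ,
      Nat.factorial_succ]
  have h2 : (m + 1).factorial = (m + 1) * m.factorial := Nat.factorial_succ m
  have h3 : (2 * m + 1).factorial = (2 * m + 1) * (2 * m).factorial := Nat.factorial_succ _
  rw [h1, h2, h3]
  have hmf : ((m.factorial : ℝ)) ≠ 0 := by exact_mod_cast m.factorial_pos.ne'
  have h2mf : (((2 * m).factorial : ℝ)) ≠ 0 := by exact_mod_cast (2 * m).factorial_pos.ne'
  push_cast
  have e1 : (2:ℝ) ^ (m + 1) = 2 ^ m * 2 := pow_succ 2 m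
  have e2 : (2:ℝ) ^ (2 * m + 1) = 2 ^ m * 2 ^ m * 2 := by
    rw [pow_succ, two_mul, pow_add]
  rw [e1, e2]
  have h2m1 : ((2:ℝ) * m + 1) ≠ 0 := by positivity
  have hm1 : ((m:ℝ) + 1) ≠ 0 := by positivity
  have h2pm : ((2:ℝ)) ^ m ≠ 0 := by positivity
  field_simp

/-- `∫ P_{n-1} q = 2/n` for any `q` of degree `n-1` with leading coefficient `aₙ`. -/
lemma pint_Lp_pred_mul (n : ℕ) (hn : 1 ≤ n) (q : ℝ[X])
    (hq : (q - C (lc n) * X ^ (n - 1)).degree < ((n - 1 : ℕ) : WithBot ℕ)) :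
    pint (Lp (n - 1) * q) = 2 / n := by
  have hsplit : Lp (n - 1) * q =
      C (lc n) * (Lp (n - 1) * X ^ (n - 1)) +
        Lp (n - 1) * (q - C (lc n) * X ^ (n - 1)) := by ring
  rw [hsplit, pint_add, pint_smul, pint_ortho _ _ hq, key_const n hn, add_zero]

lemma hd_sq : derivative ((X : ℝ[X]) ^ 2 - 1) = C 2 * X := by
  simp [derivative_X_pow]
  rw [one_add_one_eq_two]; exact (map_ofNat C 2).symm

/-- Leibniz: `Dᵏ(X p) = X Dᵏ p + k D^{k-1} p`. -/
lemma iterate_derivative_X_mul (k : ℕ) (p : ℝ[X]) :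
    derivative^[k] (X * p) =
      X * derivative^[k] p + ((k : ℕ) : ℝ[X]) * derivative^[k - 1] p := by
  induction k generalizing p with
  | zero => simp
  | succ k ih =>
    rw [Function.iterate_succ_apply', ih, derivative_add, derivative_mul, derivative_mul,
      derivative_X, derivative_natCast, one_mul, zero_mul, zero_add]
    cases k with
    | zero =>
      push_cast
      simp [add_comm]
    | succ j =>
      rw [Nat.add_sub_cancel, ← Function.iterate_succ_apply' derivative j p,
        ← Function.iterate_succ_apply' derivative (j + 1) p]
      push_cast
      ring

/-- `u_m' = 2m X u_{m-1}`. -/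
lemma U_deriv' (m : ℕ) (hm : 1 ≤ m) :
    derivative (U m) = ((2 * m : ℕ) : ℝ[X]) * (X * U (m - 1)) := by
  rw [U, derivative_pow, hd_sq, C_eq_natCast, U,
    show (C (2:ℝ)) = (2:ℝ[X]) from map_ofNat C 2]
  push_cast
  ring

/-- `(X²−1) u_m' = 2m X u_m`. -/
lemma U_deriv (m : ℕ) (hm : 1 ≤ m) :
    ((X : ℝ[X]) ^ 2 - 1) * derivative (U m) = ((2 * m : ℕ) : ℝ[X]) * (X * U m) := by
  rw [U_deriv' m hm]
  have h1 : U m = ((X : ℝ[X]) ^ 2 - 1) * U (m - 1) := by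
    rw [U, U, ← pow_succ']
    congr 1
    omega
  rw [h1]
  ring

/-- `(X²−1) D^{m+1} u_m = m(m+1) D^{m-1} u_m`. -/
lemma sq_sub_one_mul_iterate (m : ℕ) (hm : 1 ≤ m) :
    ((X : ℝ[X]) ^ 2 - 1) * derivative^[m + 1] (U m) =
      ((m * (m + 1) : ℕ) : ℝ[X]) * derivative^[m - 1] (U m) := by
  obtain ⟨j, rfl⟩ : ∃ j, m = j + 1 := ⟨m - 1, by omega⟩
  simp only [Nat.add_sub_cancel]
  set u := U (j + 1) with hu
  set w := derivative u with hw
  have key := congrArg (derivative^[j + 1]) (U_deriv (j + 1) (by omega))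
  have e : ((X : ℝ[X]) ^ 2 - 1) * w = X * (X * w) - w := by ring
  rw [e, iterate_derivative_sub, iterate_derivative_natCast_mul,
    iterate_derivative_X_mul, iterate_derivative_X_mul, iterate_derivative_X_mul,
    iterate_derivative_X_mul] at key
  simp only [Nat.add_sub_cancel] at key
  -- identify iterated derivatives of w with those of u
  have c1 : derivative^[j + 1] w = derivative^[j + 2] u := by
    rw [hw, ← Function.iterate_succ_apply derivative (j + 1) u]
  have c2 : derivative^[j] w = derivative^[j + 1] u := by
    rw [hw, ← Function.iterate_succ_apply derivative j u]
  rw [c1, c2] at key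
  cases j with
  | zero =>
    push_cast at key ⊢
    linear_combination key
  | succ i =>
    have c3 : derivative^[i + 1 - 1] w = derivative^[i + 1] u := by
      rw [hw, Nat.add_sub_cancel, ← Function.iterate_succ_apply derivative i u]
    rw [c3] at key
    push_cast at key ⊢
    linear_combination key

lemma rc_succ (n : ℕ) (hn : 1 ≤ n) : rc (n - 1) = 2 * n * rc n := by
  obtain ⟨m, rfl⟩ : ∃ m, n = m + 1 := ⟨n - 1, by omega⟩
  simp only [Nat.add_sub_cancel]
  rw [rc, rc, Nat.factorial_succ, pow_succ]
  have h1 : ((m.factorial : ℝ)) ≠ 0 := by exact_mod_cast m.factorial_pos.ne'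
  have h2 : ((2 : ℝ)) ^ m ≠ 0 := by positivity
  push_cast
  field_simp

lemma C_rc_succ (n : ℕ) (hn : 1 ≤ n) :
    C (rc (n - 1)) = 2 * ((n : ℕ) : ℝ[X]) * C (rc n) := by
  rw [rc_succ n hn, map_mul, map_mul, map_ofNat, C_eq_natCast]

lemma iter_deriv_U_succ (m k : ℕ) (hm : 1 ≤ m) :
    derivative^[k + 1] (U m) =
      ((2 * m : ℕ) : ℝ[X]) * (X * derivative^[k] (U (m - 1)) +
        ((k : ℕ) : ℝ[X]) * derivative^[k - 1] (U (m - 1))) := by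
  rw [Function.iterate_succ_apply, U_deriv' m hm, iterate_derivative_natCast_mul,
    iterate_derivative_X_mul]

lemma derivative_Lp_eq_iter (n : ℕ) :
    derivative (Lp n) = C (rc n) * derivative^[n + 1] (U n) := by
  rw [Lp, derivative_mul, derivative_C, zero_mul, zero_add,
    Function.iterate_succ_apply' derivative n (U n)]

/-- `Pₙ' = X P_{n-1}' + n P_{n-1}`. -/
lemma Lp_deriv_eq (n : ℕ) (hn : 1 ≤ n) :
    derivative (Lp n) = X * derivative (Lp (n - 1)) + ((n : ℕ) : ℝ[X]) * Lp (n - 1) := by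
  obtain ⟨m, rfl⟩ : ∃ m, n = m + 1 := ⟨n - 1, by omega⟩
  simp only [Nat.add_sub_cancel]
  have h2 : derivative (Lp (m + 1)) =
      C (rc (m + 1)) * derivative^[m + 1] (derivative (U (m + 1))) := by
    rw [derivative_Lp_eq_iter, Function.iterate_succ_apply]
  rw [h2, U_deriv' (m + 1) (by omega)]
  simp only [Nat.add_sub_cancel]
  rw [iterate_derivative_natCast_mul, iterate_derivative_X_mul, Nat.add_sub_cancel]
  rw [derivative_Lp_eq_iter m, Lp]
  have hC := C_rc_succ (m + 1) (by omega)
  simp only [Nat.add_sub_cancel] at hC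
  rw [hC]
  push_cast
  ring

/-- `X Pₙ' = P_{n-1}' + n Pₙ`. -/
lemma X_mul_Lp_deriv (n : ℕ) (hn : 1 ≤ n) :
    X * derivative (Lp n) = derivative (Lp (n - 1)) + ((n : ℕ) : ℝ[X]) * Lp n := by
  rcases eq_or_lt_of_le hn with h1 | h2
  · -- n = 1
    subst h1
    have e1 : U 1 = (X : ℝ[X]) ^ 2 - 1 := pow_one _
    have hd1 : derivative (Lp 1) = C (rc 1) * derivative^[2] (U 1) := derivative_Lp_eq_iter 1
    have e2 : derivative^[2] (U 1) = C 2 := by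
      rw [show (2 : ℕ) = 1 + 1 from rfl, Function.iterate_succ_apply', Function.iterate_one,
        e1, hd_sq]
      simp
    have e3 : derivative (Lp 0) = 0 := by
      rw [derivative_Lp_eq_iter 0]
      simp [U]
    show X * derivative (Lp 1) = derivative (Lp 0) + ((1 : ℕ) : ℝ[X]) * Lp 1
    rw [hd1, e2, e3, Lp, Function.iterate_one, e1, hd_sq]
    push_cast
    ring
  · obtain ⟨m, rfl⟩ : ∃ m, n = m + 2 := ⟨n - 2, by omega⟩
    simp only [show m + 2 - 1 = m + 1 from rfl]
    have hDu := iter_deriv_U_succ (m + 2) (m + 2) (by omega)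
    have hDu2 := iter_deriv_U_succ (m + 2) (m + 1) (by omega)
    simp only [show m + 2 - 1 = m + 1 from rfl] at hDu hDu2
    simp only [show m + 1 + 1 = m + 2 from rfl, show m + 1 - 1 = m from rfl] at hDu2
    have hsq := sq_sub_one_mul_iterate (m + 1) (by omega)
    simp only [show m + 1 + 1 = m + 2 from rfl, show m + 1 - 1 = m from rfl] at hsq
    have hL1 : derivative (Lp (m + 2)) = C (rc (m + 2)) * derivative^[m + 2 + 1] (U (m + 2)) :=
      derivative_Lp_eq_iter (m + 2)
    have hL2 : derivative (Lp (m + 1)) = C (rc (m + 1)) * derivative^[m + 2] (U (m + 1)) := by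
      have := derivative_Lp_eq_iter (m + 1)
      simpa only [show m + 1 + 1 = m + 2 from rfl] using this
    rw [hL1, hL2, Lp, hDu, hDu2]
    have hC := C_rc_succ (m + 2) (by omega)
    simp only [show m + 2 - 1 = m + 1 from rfl] at hC
    rw [hC]
    push_cast at hsq ⊢
    linear_combination (C (rc (m + 2)) * (2 * ((m : ℝ[X]) + 2))) * hsq

/-- Bonnet at a root: `(1−η²) Pₙ'(η) = n P_{n−1}(η)`. -/
lemma bonnet_at_root (n : ℕ) (hn : 1 ≤ n) (η : ℝ) (hη : (Lp n).eval η = 0) :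
    (1 - η ^ 2) * (derivative (Lp n)).eval η = n * (Lp (n - 1)).eval η := by
  have h1 := congrArg (eval η) (Lp_deriv_eq n hn)
  have h2 := congrArg (eval η) (X_mul_Lp_deriv n hn)
  simp only [eval_add, eval_mul, eval_X, eval_natCast, hη, mul_zero, add_zero] at h1 h2
  linear_combination h1 - η * h2

lemma exists_roots_aux (n : ℕ) : ∀ k, k ≤ n →
    ∃ η : Fin k → ℝ, StrictMono η ∧ (∀ i, η i ∈ Set.Ioo (-1 : ℝ) 1) ∧
      ∀ i, (derivative^[k] (U n)).eval (η i) = 0 := by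
  intro k
  induction k with
  | zero =>
    intro _
    exact ⟨Fin.elim0, fun i => i.elim0, fun i => i.elim0, fun i => i.elim0⟩
  | succ k ih =>
    intro hk1
    obtain ⟨ξ, hmono, hIoo, hroot⟩ := ih (by omega)
    have hklt : k < n := by omega
    -- endpoints of the subintervals
    set a : Fin (k + 1) → ℝ :=
      fun i => if hi : (i : ℕ) = 0 then (-1 : ℝ) else ξ ⟨(i : ℕ) - 1, by omega⟩ with ha_def
    set b : Fin (k + 1) → ℝ :=
      fun i => if hi : (i : ℕ) < k then ξ ⟨(i : ℕ), hi⟩ else 1 with hb_def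
    have ha0 : ∀ i, (derivative^[k] (U n)).eval (a i) = 0 := by
      intro i
      rw [ha_def]
      by_cases hi : (i : ℕ) = 0
      · simp only [hi, dif_pos]
        exact iterate_deriv_U_eval_neg_one n k hklt
      · simp only [hi, dif_neg, not_false_iff]
        exact hroot _
    have hb0 : ∀ i, (derivative^[k] (U n)).eval (b i) = 0 := by
      intro i
      rw [hb_def]
      by_cases hi : (i : ℕ) < k
      · simp only [hi, dif_pos]
        exact hroot _
      · simp only [hi, dif_neg, not_false_iff]
        exact iterate_deriv_U_eval_one n k hklt
    have hma : ∀ i, (-1 : ℝ) ≤ a i := by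
      intro i
      rw [ha_def]
      by_cases hi : (i : ℕ) = 0
      · simp [hi]
      · simp only [hi, dif_neg, not_false_iff]
        exact (hIoo _).1.le
    have hmb : ∀ i, b i ≤ 1 := by
      intro i
      rw [hb_def]
      by_cases hi : (i : ℕ) < k
      · simp only [hi, dif_pos]
        exact (hIoo _).2.le
      · simp [hi]
    have hab : ∀ i, a i < b i := by
      intro i
      rw [ha_def, hb_def]
      by_cases hi : (i : ℕ) = 0
      · simp only [hi, dif_pos]
        split_ifs with h
        · exact (hIoo _).1
        · norm_num
      · have hik2 : (i : ℕ) ≤ k := by omega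
        by_cases hik : (i : ℕ) < k
        · simp only [hi, hik, dif_pos, dif_neg, not_false_iff]
          exact hmono (Fin.mk_lt_mk.mpr (by omega))
        · simp only [hi, hik, dif_neg, not_false_iff]
          exact (hIoo _).2
    have hba : ∀ i j : Fin (k + 1), i < j → b i ≤ a j := by
      intro i j hij
      rw [Fin.lt_def] at hij
      have hik : (i : ℕ) < k := by omega
      have hj0 : (j : ℕ) ≠ 0 := by omega
      rw [ha_def, hb_def]
      simp only [hik, dif_pos, hj0, dif_neg, not_false_iff]
      exact hmono.monotone (by simp [Fin.le_def]; omega)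
    have H : ∀ i : Fin (k + 1), ∃ c, c ∈ Set.Ioo (a i) (b i) ∧
        (derivative^[k + 1] (U n)).eval c = 0 := by
      intro i
      obtain ⟨c, hc1, hc2⟩ := exists_deriv_eq_zero (hab i)
        ((derivative^[k] (U n)).continuous.continuousOn)
        ((ha0 i).trans (hb0 i).symm)
      refine ⟨c, hc1, ?_⟩
      rw [Function.iterate_succ_apply', ← Polynomial.deriv]
      exact hc2
    choose c hc1 hc2 using H
    refine ⟨c, ?_, ?_, hc2⟩
    · intro i j hij
      exact lt_of_lt_of_le (hc1 i).2 ((hba i j hij).trans (hc1 j).1.le)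
    · intro i
      exact ⟨lt_of_le_of_lt (hma i) (hc1 i).1, lt_of_lt_of_le (hc1 i).2 (hmb i)⟩

/-- Rolle: `n` distinct roots of `Dⁿ(X²−1)ⁿ` in `(−1,1)`. -/
lemma exists_roots (n : ℕ) :
    ∃ η : Fin n → ℝ, StrictMono η ∧ (∀ i, η i ∈ Set.Ioo (-1 : ℝ) 1) ∧
      ∀ i, (derivative^[n] (U n)).eval (η i) = 0 := by
  exact exists_roots_aux n n le_rfl

lemma pint_sum {ι : Type*} (s : Finset ι) (p : ι → ℝ[X]) :
    pint (∑ i ∈ s, p i) = ∑ i ∈ s, pint (p i) := by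
  simp only [pint, eval_finset_sum]
  exact intervalIntegral.integral_finset_sum fun i _ => pint_intable (p i)

end GaussLeg

/-- Exactness of Gauss–Legendre quadrature: for `n ≥ 1`, `P_n` has exactly `n` distinct
real roots `η₁,…,η_n`, all in `(−1,1)`, and with weights
`w_i = 2/((1 − η_i²)(P_n′(η_i))²)` the rule `∫_{−1}^1 f = Σ w_i f(η_i)` is exact for all
polynomials `f` of degree at most `2n − 1`. -/
theorem gauss_legendre_quadrature_exact (n : ℕ) (hn : 1 ≤ n) :
    ∃ η : Fin n → ℝ,
      Function.Injective η ∧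
      (∀ i, η i ∈ Set.Ioo (-1 : ℝ) 1) ∧
      {x : ℝ | legendreP n x = 0} = Set.range η ∧
      ∀ f : Polynomial ℝ, f.natDegree ≤ 2 * n - 1 →
        (∫ x in (-1 : ℝ)..1, Polynomial.eval x f) =
          ∑ i, (2 / ((1 - η i ^ 2) * (deriv (legendreP n) (η i)) ^ 2)) *
            Polynomial.eval (η i) f := by
  classical
  open Polynomial GaussLeg Finset in
  obtain ⟨η, hmono, hIoo, hroot⟩ := exists_roots n
  have hinj : Function.Injective η := hmono.injective
  have hinjOn : Set.InjOn η ((Finset.univ : Finset (Fin n)) : Set (Fin n)) :=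
    fun a _ b _ h => hinj h
  have hcard : (Finset.univ : Finset (Fin n)).card = n := by simp
  have hLproot : ∀ i, (Lp n).eval (η i) = 0 := by
    intro i
    simp [GaussLeg.Lp, hroot i]
  set M : ℝ[X] := Lagrange.nodal Finset.univ η with hM
  have hMmonic : M.Monic := Lagrange.nodal_monic
  have hMdeg : M.natDegree = n := by rw [hM, Lagrange.natDegree_nodal, hcard]
  have hMdegree : M.degree = (n : WithBot ℕ) := by rw [hM, Lagrange.degree_nodal, hcard]
  have hlcne : lc n ≠ 0 := (lc_pos n).ne'
  -- factorization of the Legendre polynomial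
  have hfact : Lp n = C (lc n) * M := by
    have hdeq : (Lp n).degree = (C (lc n) * M).degree := by
      rw [degree_C_mul hlcne, hMdegree, degree_eq_natDegree (Lp_ne_zero n), Lp_natDegree]
    have hlead : (Lp n).leadingCoeff = (C (lc n) * M).leadingCoeff := by
      rw [Lp_leadingCoeff, leadingCoeff_mul, leadingCoeff_C, hMmonic.leadingCoeff, mul_one]
    have hsub := degree_sub_lt hdeq (Lp_ne_zero n) hlead
    rw [degree_eq_natDegree (Lp_ne_zero n), Lp_natDegree] at hsub
    have hz : Lp n - C (lc n) * M = 0 := by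
      refine Polynomial.eq_zero_of_degree_lt_of_eval_index_eq_zero Finset.univ hinjOn ?_ ?_
      · rw [hcard]; exact hsub
      · intro i _
        simp [hLproot i, hM, Lagrange.eval_nodal_at_node (Finset.mem_univ i)]
    exact sub_eq_zero.mp hz
  set d : Fin n → ℝ :=
    fun i => (Lagrange.nodal ((Finset.univ : Finset (Fin n)).erase i) η).eval (η i) with hd
  have hdne : ∀ i, d i ≠ 0 := by
    intro i
    rw [hd]
    apply Lagrange.eval_nodal_not_at_node
    intro j hj h
    exact (Finset.mem_erase.mp hj).1 (hinj h.symm)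
  have hDi : ∀ i, (derivative (Lp n)).eval (η i) = lc n * d i := by
    intro i
    rw [hfact, derivative_mul, derivative_C, zero_mul, zero_add, eval_mul, eval_C, hM]
    congr 1
    exact Lagrange.eval_nodal_derivative_eval_node_eq (Finset.mem_univ i)
  have hDine : ∀ i, (derivative (Lp n)).eval (η i) ≠ 0 := fun i => by
    rw [hDi]; exact mul_ne_zero hlcne (hdne i)
  -- basis in nodal form
  have hbasis : ∀ i, Lagrange.basis Finset.univ η i =
      C (d i)⁻¹ * Lagrange.nodal (Finset.univ.erase i) η := by
    intro i
    have hsplit : ∏ j ∈ Finset.univ.erase i, Lagrange.basisDivisor (η i) (η j)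
        = (∏ j ∈ Finset.univ.erase i, C ((η i - η j)⁻¹)) *
          ∏ j ∈ Finset.univ.erase i, (X - C (η j)) := by
      rw [← Finset.prod_mul_distrib]
      rfl
    rw [Lagrange.basis, hsplit, ← map_prod, Finset.prod_inv_distrib, hd]
    simp [Lagrange.nodal, eval_prod]
  set w : Fin n → ℝ := fun i => pint (Lagrange.basis Finset.univ η i) with hw
  -- exactness with abstract weights
  have hExact : ∀ f : ℝ[X], f.natDegree ≤ 2 * n - 1 →
      pint f = ∑ i, f.eval (η i) * w i := by
    intro f hf
    have hfd := modByMonic_add_div f M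
    set q := f /ₘ M with hq
    set r := f %ₘ M with hr
    have hqn : q.natDegree < n := by
      have h1 := natDegree_divByMonic f hMmonic
      rw [hMdeg, ← hq] at h1
      omega
    have hdegq : q.degree < (n : WithBot ℕ) :=
      lt_of_le_of_lt degree_le_natDegree (by exact_mod_cast hqn)
    have hMq : pint (M * q) = 0 := by
      have h1 : Lp n * q = C (lc n) * (M * q) := by rw [hfact]; ring
      have h2 := pint_ortho n q hdegq
      rw [h1, pint_smul] at h2
      exact (mul_eq_zero.mp h2).resolve_left hlcne
    have hdegr : r.degree < (((Finset.univ : Finset (Fin n)).card : ℕ) : WithBot ℕ) := by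
      rw [hcard]
      have h1 := degree_modByMonic_lt f hMmonic
      rwa [hMdegree] at h1
    have hrint := Lagrange.eq_interpolate hinjOn hdegr
    have hreval : ∀ i, r.eval (η i) = f.eval (η i) := by
      intro i
      conv_rhs => rw [← hfd]
      simp [hM, Lagrange.eval_nodal_at_node (Finset.mem_univ i)]
    calc pint f = pint (r + M * q) := by rw [hfd]
      _ = pint r + pint (M * q) := pint_add _ _
      _ = pint r := by rw [hMq, add_zero]
      _ = ∑ i, f.eval (η i) * w i := by
          conv_lhs => rw [hrint]
          rw [Lagrange.interpolate_apply, pint_sum]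
          refine Finset.sum_congr rfl fun i _ => ?_
          rw [pint_smul, hreval i]
  -- the weights are the Gauss–Legendre weights
  have hwval : ∀ i, w i =
      2 / ((1 - η i ^ 2) * ((derivative (Lp n)).eval (η i)) ^ 2) := by
    intro i
    set Q := Lagrange.nodal ((Finset.univ : Finset (Fin n)).erase i) η with hQdef
    have hQmonic : Q.Monic := Lagrange.nodal_monic
    have hQcard : ((Finset.univ : Finset (Fin n)).erase i).card = n - 1 := by
      rw [Finset.card_erase_of_mem (Finset.mem_univ i), hcard]
    have hQdeg : Q.natDegree = n - 1 := by
      rw [hQdef, Lagrange.natDegree_nodal, hQcard]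
    set g : ℝ[X] := Lp (n - 1) * (C (lc n) * Q) with hg
    have hgdeg : g.natDegree ≤ 2 * n - 1 := by
      calc g.natDegree ≤ (Lp (n - 1)).natDegree + (C (lc n) * Q).natDegree :=
            natDegree_mul_le
        _ ≤ (Lp (n - 1)).natDegree + ((C (lc n)).natDegree + Q.natDegree) :=
            Nat.add_le_add_left natDegree_mul_le _
        _ ≤ 2 * n - 1 := by rw [natDegree_C, hQdeg, Lp_natDegree]; omega
    have hpg : pint g = 2 / n := by
      apply pint_Lp_pred_mul n hn
      have hsplit : C (lc n) * Q - C (lc n) * X ^ (n - 1) =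
          C (lc n) * (Q - X ^ (n - 1)) := by ring
      rw [hsplit, degree_C_mul hlcne]
      have hdQ : Q.degree = ((n - 1 : ℕ) : WithBot ℕ) := by
        rw [hQdef, Lagrange.degree_nodal, hQcard]
      have h1 := degree_sub_lt (q := X ^ (n - 1)) (by rw [hdQ, degree_X_pow])
        hQmonic.ne_zero (by rw [hQmonic.leadingCoeff, (monic_X_pow _).leadingCoeff])
      rwa [hdQ] at h1
    have hsum := hExact g hgdeg
    rw [hpg] at hsum
    have hzero : ∀ j ∈ (Finset.univ : Finset (Fin n)), j ≠ i → g.eval (η j) * w j = 0 := by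
      intro j _ hji
      have hQj : Q.eval (η j) = 0 := by
        rw [hQdef]
        exact Lagrange.eval_nodal_at_node (Finset.mem_erase.mpr ⟨hji, Finset.mem_univ j⟩)
      simp [hg, hQj]
    rw [Finset.sum_eq_single i hzero (fun h => absurd (Finset.mem_univ i) h)] at hsum
    have hgi : g.eval (η i) = (Lp (n - 1)).eval (η i) * ((derivative (Lp n)).eval (η i)) := by
      rw [hg, eval_mul, eval_mul, eval_C, hDi i, hd]
    rw [hgi] at hsum
    have hbon := bonnet_at_root n hn (η i) (hLproot i)
    have hDne := hDine i
    have h1mη : (1 : ℝ) - η i ^ 2 ≠ 0 := by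
      have h := hIoo i
      have h1 := h.1
      have h2 := h.2
      nlinarith
    have hnne : (n : ℝ) ≠ 0 := by
      have : 0 < n := hn
      positivity
    have hLpval : (Lp (n - 1)).eval (η i) =
        (1 - η i ^ 2) * ((derivative (Lp n)).eval (η i)) / n := by
      field_simp
      linarith [hbon]
    rw [hLpval] at hsum
    field_simp at hsum ⊢
    linear_combination -hsum
  -- final packaging
  refine ⟨η, hinj, hIoo, ?_, ?_⟩
  · ext x
    simp only [Set.mem_setOf_eq, Set.mem_range]
    rw [legendreP_eq, hfact, eval_mul, eval_C, hM, Lagrange.eval_nodal]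
    constructor
    · intro h
      have h2 : ∏ j, (x - η j) = 0 := by
        rcases mul_eq_zero.mp h with h | h
        · exact absurd h hlcne
        · exact h
      obtain ⟨j, _, hj⟩ := Finset.prod_eq_zero_iff.mp h2
      exact ⟨j, by linarith [sub_eq_zero.mp hj]⟩
    · rintro ⟨j, rfl⟩
      apply mul_eq_zero_of_right
      exact Finset.prod_eq_zero (Finset.mem_univ j) (by simp)
  · intro f hf
    have hE := hExact f hf
    rw [show (∫ x in (-1 : ℝ)..1, Polynomial.eval x f) = pint f from rfl, hE]
    refine Finset.sum_congr rfl fun i _ => ?_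
    rw [hwval i, deriv_legendreP_eq]
    ring
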